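/- Under the hypotheses of the previous construction (Δ not the boundary of a simplex, h_v | m''_v, I = (h_1 m'_1,…,h_n m'_n)), the Scarf complex Γ of I has n vertices and contains Δ as a subcomplex: every face of Δ is a face of Γ. -/

import Mathlib

noncomputable section
attribute [local instance] Classical.propDecidable

/-- The simplicial complex generated by a set of faces: all nonempty subsets. -/
def gen {V : Type} (S : Finset (Finset V)) : Finset (Finset V) :=
  S.biUnion fun F => F.powerset.filter (· ≠ ∅)

/-- The facets (maximal faces) of a complex given by its finite set of faces. -/
def facets {V : Type} (Δ : Finset (Finset V)) : Finset (Finset V) :=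
  Δ.filter fun F => ∀ G ∈ Δ, F ⊆ G → F = G

/-- A (finite, abstract) simplicial complex: nonempty faces, closed under nonempty subsets. -/
def IsComplex {V : Type} (Δ : Finset (Finset V)) : Prop :=
  ∅ ∉ Δ ∧ ∀ F ∈ Δ, ∀ G, G ⊆ F → G ≠ ∅ → G ∈ Δ

/-- `F` is a leaf of `Δ`: `F` is a facet which is either the only facet, or
there is another facet `G` (a joint) with `F ∩ (Δ ∖ F) ⊆ G`, i.e. the
intersection of `F` with any other facet is contained in `G`. -/
def IsLeaf {V : Type} (Δ : Finset (Finset V)) (F : Finset V) : Prop :=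
  F ∈ facets Δ ∧ (facets Δ = {F} ∨
    ∃ G ∈ facets Δ, G ≠ F ∧ ∀ H ∈ facets Δ, H ≠ F → F ∩ H ⊆ G)

def HasLeaf {V : Type} (Δ : Finset (Finset V)) : Prop := ∃ F, IsLeaf Δ F

/-- A forest: every nonempty subcollection (complex generated by a subset of the
facets) has a leaf. -/
def IsForest {V : Type} (Δ : Finset (Finset V)) : Prop :=
  ∀ S ⊆ facets Δ, S.Nonempty → HasLeaf (gen S)

/-- Vertex set of a complex. -/
def vtx {V : Type} (Δ : Finset (Finset V)) : Finset V := Δ.sup id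

/-- Connectedness: nonempty, and any two vertices are joined by a chain of faces. -/
def Conn {V : Type} (Δ : Finset (Finset V)) : Prop :=
  Δ.Nonempty ∧ ∀ u ∈ vtx Δ, ∀ v ∈ vtx Δ,
    Relation.ReflTransGen (fun a b => ∃ σ ∈ Δ, a ∈ σ ∧ b ∈ σ) u v

/-- A simplicial tree is a connected forest. -/
def IsTree {V : Type} (Δ : Finset (Finset V)) : Prop := Conn Δ ∧ IsForest Δ

/-! Monomials in the variables `x_σ`, indexed by the nonempty faces `σ` of a complex
`Δ`.  All monomials arising in the Peeva–Velasco construction and its refinement are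
squarefree, so we represent a squarefree monomial by its finite set of variables
(a `Finset` of faces); then divisibility is `⊆`, lcm is `∪`, and a product of
monomials with disjoint supports is `∪`. -/

/-- The Peeva–Velasco generator `m_v = ∏_{σ ∈ Δ, v ∉ σ} x_σ`. -/
def mPV {V : Type} (Δ : Finset (Finset V)) (v : V) : Finset (Finset V) :=
  Δ.filter fun σ => v ∉ σ

/-- `A_Δ(v)`: the facets of `Δ` not containing `v`. -/
def AF {V : Type} (Δ : Finset (Finset V)) (v : V) : Finset (Finset V) :=
  (facets Δ).filter fun F => v ∉ F

/-- `B_Δ(v)`: the facets of `Δ` containing `v`. -/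
def BF {V : Type} (Δ : Finset (Finset V)) (v : V) : Finset (Finset V) :=
  (facets Δ).filter fun F => v ∈ F

/-- The refined generator `m'_v`: the squarefree product of the variables
`x_{G∖{v}}` for facets `G ∋ v`, the variables `x_F` for facets `F ∌ v`, and the
variables `x_σ` for maximal proper (nonempty) faces `σ` of such facets `F`. -/
def mPV' {V : Type} (Δ : Finset (Finset V)) (v : V) : Finset (Finset V) :=
  ((BF Δ v).image (fun G => G.erase v)).filter (· ≠ ∅) ∪ AF Δ v ∪
    (AF Δ v).biUnion fun F => F.powerset.filter fun σ => σ.card + 1 = F.card ∧ σ ≠ ∅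

/-- `Δ` is the boundary of the full simplex on its `n` vertices: all proper
nonempty subsets of the vertex set. -/
def IsBoundaryOfFullSimplex {n : ℕ} (Δ : Finset (Finset (Fin n))) : Prop :=
  Δ = (Finset.univ : Finset (Fin n)).powerset.filter
        fun s => s ≠ ∅ ∧ s ≠ Finset.univ

/-- Every face of a complex is contained in a facet. -/
lemma exists_facet {V : Type} (Δ : Finset (Finset V)) {ρ : Finset V} (hρ : ρ ∈ Δ) :
    ∃ F ∈ facets Δ, ρ ⊆ F := by

  obtain ⟨F, hF, hmax⟩ := (Δ.filter fun G => ρ ⊆ G).exists_maximal ⟨ρ, by simp [hρ]⟩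
  rw [Finset.mem_filter] at hF
  refine ⟨F, ?_, hF.2⟩
  rw [facets, Finset.mem_filter]
  refine ⟨hF.1, fun G hG hFG => ?_⟩
  by_contra hne
  exact hne (le_antisymm hFG (hmax (Finset.mem_filter.mpr ⟨hG, hF.2.trans hFG⟩) hFG))

lemma facets_subset {V : Type} (Δ : Finset (Finset V)) : facets Δ ⊆ Δ :=
  Finset.filter_subset _ _

lemma mem_mPV {V : Type} (Δ : Finset (Finset V)) (v : V) (π : Finset V) :
    π ∈ mPV Δ v ↔ π ∈ Δ ∧ v ∉ π := by
  simp [mPV]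

lemma mem_mPV' {V : Type} (Δ : Finset (Finset V)) (v : V) (π : Finset V) :
    π ∈ mPV' Δ v ↔ ((∃ G ∈ facets Δ, v ∈ G ∧ G.erase v = π) ∧ π ≠ ∅) ∨
      (π ∈ facets Δ ∧ v ∉ π) ∨
      (∃ F ∈ facets Δ, v ∉ F ∧ π ⊆ F ∧ π.card + 1 = F.card ∧ π ≠ ∅) := by
  simp only [mPV', AF, BF, Finset.mem_union, Finset.mem_filter, Finset.mem_image,
    Finset.mem_biUnion, Finset.mem_powerset]
  constructor
  · rintro ((⟨⟨G, ⟨hG1, hG2⟩, hG3⟩, hne⟩ | ⟨h1, h2⟩) | ⟨F, ⟨hF1, hF2⟩, hπ1, hπ2, hπ3⟩)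
    · exact Or.inl ⟨⟨G, hG1, hG2, hG3⟩, hne⟩
    · exact Or.inr (Or.inl ⟨h1, h2⟩)
    · exact Or.inr (Or.inr ⟨F, hF1, hF2, hπ1, hπ2, hπ3⟩)
  · rintro (⟨⟨G, hG1, hG2, hG3⟩, hne⟩ | ⟨h1, h2⟩ | ⟨F, hF1, hF2, hπ1, hπ2, hπ3⟩)
    · exact Or.inl (Or.inl ⟨⟨G, ⟨hG1, hG2⟩, hG3⟩, hne⟩)
    · exact Or.inl (Or.inr ⟨h1, h2⟩)
    · exact Or.inr ⟨F, ⟨hF1, hF2⟩, hπ1, hπ2, hπ3⟩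

lemma mPV'_subset_mPV {V : Type} (Δ : Finset (Finset V)) (hΔ : IsComplex Δ) (v : V) :
    mPV' Δ v ⊆ mPV Δ v := by
  intro π hπ
  rw [mem_mPV]
  rcases (mem_mPV' Δ v π).mp hπ with (⟨⟨G, hG, hvG, rfl⟩, hne⟩ | ⟨h1, h2⟩ | ⟨F, hF, hvF, hπF, _, hne⟩)
  · exact ⟨hΔ.2 G (facets_subset Δ hG) _ (Finset.erase_subset _ _) hne, Finset.notMem_erase _ _⟩
  · exact ⟨facets_subset Δ h1, h2⟩
  · exact ⟨hΔ.2 F (facets_subset Δ hF) _ hπF hne, fun hv => hvF (hπF hv)⟩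

/-- With generators `g_v = h_v m'_v` where `h_v ∣ m''_v = m_v/m'_v`
(squarefree monomials represented by their supports), and assuming (as known) that
`Δ` is the Scarf complex of `J_Δ`, the Scarf complex `Γ` of
`I = (g_1, …, g_n)` has all `n` vertices, and contains `Δ` as a subcomplex: every
(nonempty) face of `Δ` is a face of `Γ`.  Membership of `σ` in the Scarf complex of
`(g_1, …, g_n)` means that the lcm of the `g`-labels of `σ` differs from that of
every other subset. -/
theorem scarf_of_scaled_contains {n : ℕ} (Δ : Finset (Finset (Fin n)))
    (hΔ : IsComplex Δ) (hvtx : ∀ v : Fin n, ({v} : Finset (Fin n)) ∈ Δ)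
    (hnb : ¬ IsBoundaryOfFullSimplex Δ)
    (hScarfJ : ∀ σ : Finset (Fin n), σ.Nonempty →
      (σ ∈ Δ ↔ ∀ τ : Finset (Fin n), τ ≠ σ →
        τ.biUnion (mPV Δ) ≠ σ.biUnion (mPV Δ)))
    (h : Fin n → Finset (Finset (Fin n)))
    (hh : ∀ v : Fin n, h v ⊆ mPV Δ v \ mPV' Δ v)
    (g : Fin n → Finset (Finset (Fin n)))
    (hg : ∀ v : Fin n, g v = h v ∪ mPV' Δ v) :
    (∀ i : Fin n, ∀ τ : Finset (Fin n), τ ≠ {i} →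
      τ.biUnion g ≠ ({i} : Finset (Fin n)).biUnion g) ∧
    (∀ σ ∈ Δ, ∀ τ : Finset (Fin n), τ ≠ σ →
      τ.biUnion g ≠ σ.biUnion g) := by

  have hgsub : ∀ v, g v ⊆ mPV Δ v := by
    intro v π hπ
    rw [hg v, Finset.mem_union] at hπ
    rcases hπ with hπ | hπ
    · exact (Finset.mem_sdiff.mp (hh v hπ)).1
    · exact mPV'_subset_mPV Δ hΔ v hπ
  have hm'g : ∀ v, mPV' Δ v ⊆ g v := by
    intro v
    rw [hg v]
    exact Finset.subset_union_right
  have key : ∀ τ : Finset (Fin n),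
      τ.biUnion (mPV Δ) = Δ.filter (fun ρ => ∃ π ∈ τ.biUnion g, ρ ⊆ π) := by
    intro τ
    ext ρ
    rw [Finset.mem_biUnion, Finset.mem_filter]
    constructor
    · rintro ⟨v, hv, hρ⟩
      rw [mem_mPV] at hρ
      obtain ⟨hρΔ, hvρ⟩ := hρ
      have hρne : ρ ≠ ∅ := fun hc => hΔ.1 (hc ▸ hρΔ)
      obtain ⟨F, hF, hρF⟩ := exists_facet Δ hρΔ
      refine ⟨hρΔ, ?_⟩
      by_cases hvF : v ∈ F
      · refine ⟨F.erase v, Finset.mem_biUnion.mpr ⟨v, hv, hm'g v ?_⟩,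
          Finset.subset_erase.mpr ⟨hρF, hvρ⟩⟩
        refine (mem_mPV' Δ v _).mpr (Or.inl ⟨⟨F, hF, hvF, by ext a; simp [Finset.mem_erase]⟩, ?_⟩)
        intro hc
        exact hρne (Finset.subset_empty.mp (hc ▸ Finset.subset_erase.mpr ⟨hρF, hvρ⟩))
      · exact ⟨F, Finset.mem_biUnion.mpr ⟨v, hv,
          hm'g v ((mem_mPV' Δ v F).mpr (Or.inr (Or.inl ⟨hF, hvF⟩)))⟩, hρF⟩
    · rintro ⟨hρΔ, π, hπ, hρπ⟩
      obtain ⟨v, hv, hπg⟩ := Finset.mem_biUnion.mp hπ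
      have := hgsub v hπg
      rw [mem_mPV] at this
      refine ⟨v, hv, ?_⟩
      rw [mem_mPV]
      exact ⟨hρΔ, fun hvρ => this.2 (hρπ hvρ)⟩
  have main : ∀ σ ∈ Δ, ∀ τ : Finset (Fin n), τ ≠ σ → τ.biUnion g ≠ σ.biUnion g := by
    intro σ hσ τ hne heq
    have hσne : σ.Nonempty := Finset.nonempty_iff_ne_empty.mpr (fun hc => hΔ.1 (hc ▸ hσ))
    have := (hScarfJ σ hσne).mp hσ τ hne
    apply this
    rw [key τ, key σ, heq]
  exact ⟨fun i => main {i} (hvtx i), main⟩
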